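/- A stream t over {S,P} is root-active (i.e., for every finite reduction t →* t' there is a further reduction from t' contracting a redex at the root) if and only if sum(t,n) = 0 for infinitely many n. -/

import Mathlib

/-- Infinite terms over the unary signature {S, P}, identified with streams
over {S,P}; `true` represents `S` and `false` represents `P`. -/
def SPStream : Type := ℕ → Bool

/-- A rewrite step at position `i`: the adjacent pair `S P` or `P S` starting
at position `i` is deleted (rules `P (S x) → x` and `S (P x) → x`). -/
def stepAt (i : ℕ) (t t' : SPStream) : Prop :=
  t i ≠ t (i + 1) ∧ ∀ n, t' n = if n < i then t n else t (n + 2)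

/-- A rewrite step (at any position). -/
def stepSP (t t' : SPStream) : Prop := ∃ i, stepAt i t t'

/-- A rewrite step at depth at least `d`. -/
def stepGe (d : ℕ) (t t' : SPStream) : Prop := ∃ i, d ≤ i ∧ stepAt i t t'

/-- `sconvTo t s`: there is a strongly convergent reduction of length `≤ ω`
from `t` to `s`: a sequence of stages `g n`, starting at `t`, where from stage
`n` on all contracted redexes are at depth `≥ n` (so depths tend to infinity),
and stage `n` already agrees with the limit `s` below depth `n`. -/
def sconvTo (t s : SPStream) : Prop :=
  ∃ g : ℕ → SPStream, g 0 = t ∧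
    (∀ n, Relation.ReflTransGen (stepGe n) (g n) (g (n + 1))) ∧
    (∀ n k, k < n → g n k = s k)

/-- `S^ω`, the stream of all `S`'s. -/
def Somega : SPStream := fun _ => true

/-- `P^ω`, the stream of all `P`'s. -/
def Pomega : SPStream := fun _ => false

/-- `psum t n`: number of `S`'s minus number of `P`'s among the
first `n` letters of `t`. -/
def psum (t : SPStream) : ℕ → ℤ
  | 0 => 0
  | n + 1 => psum t n + (if t n then 1 else -1)

/-- `t` is root-active: after every finite reduction from `t` a further finite
reduction reaches a term with a redex at the root (position 0). -/
def rootActive (t : SPStream) : Prop :=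
  ∀ t', Relation.ReflTransGen stepSP t t' →
    ∃ t'' t''', Relation.ReflTransGen stepSP t' t'' ∧ stepAt 0 t'' t'''

namespace SP4

lemma psum_succ (t : SPStream) (n : ℕ) :
    psum t (n+1) = psum t n + (if t n then 1 else -1) := rfl

lemma psum_step_le {i : ℕ} {t t' : SPStream} (h : stepAt i t t') :
    ∀ n, n ≤ i → psum t' n = psum t n := by
  intro n
  induction n with
  | zero => intro _; rfl
  | succ n ih =>
    intro hn
    have h2 : t' n = t n := by rw [h.2 n, if_pos (by omega)]
    rw [psum_succ, psum_succ, h2, ih (by omega)]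

lemma psum_step_ge {i : ℕ} {t t' : SPStream} (h : stepAt i t t') :
    ∀ n, i ≤ n → psum t' n = psum t (n + 2) := by
  have base : ∀ k, psum t' (i + k) = psum t (i + k + 2) := by
    intro k
    induction k with
    | zero =>
      have h1 : psum t' i = psum t i := psum_step_le h i le_rfl
      have h2 : psum t (i + 2) = psum t i := by
        rw [psum_succ, psum_succ]
        have := h.1
        cases hti : t i <;> cases hti1 : t (i+1) <;>
          simp_all <;> ring
      simpa [h2] using h1
    | succ k ih =>
      have h2 : t' (i + k) = t (i + k + 2) := by
        rw [h.2 (i + k), if_neg (by omega)]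
      have e1 : i + (k+1) = (i + k) + 1 := by ring
      have e2 : i + k + 1 + 2 = (i + k + 2) + 1 := by ring
      rw [e1, e2, psum_succ, psum_succ, h2, ih]
  intro n hn
  obtain ⟨k, rfl⟩ := Nat.exists_eq_add_of_le hn
  exact base k

lemma psum_one_ne (u : SPStream) : psum u 1 ≠ 0 := by
  rw [psum_succ]
  cases u 0 <;> simp [psum]

lemma exists_flip {u : SPStream} {m : ℕ} (h2 : 2 ≤ m) (h0 : psum u m = 0) :
    ∃ i, i + 2 ≤ m ∧ u i ≠ u (i+1) := by
  by_contra hc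
  push_neg at hc
  have hconst : ∀ n, n < m → u n = u 0 := by
    intro n
    induction n with
    | zero => intro _; rfl
    | succ n ih => intro hn; rw [← hc n (by omega), ih (by omega)]
  have hval : ∀ n, n ≤ m → psum u n = if u 0 then (n:ℤ) else -(n:ℤ) := by
    intro n
    induction n with
    | zero => intro _; simp [psum]
    | succ n ih =>
      intro hn
      rw [psum_succ, ih (by omega), hconst n (by omega)]
      cases u 0 <;> simp <;> push_cast <;> ring
  have := hval m le_rfl
  rw [h0] at this
  cases h : u 0 <;> rw [h] at this <;> simp at this <;> omega

lemma psum_two_iff (u : SPStream) : psum u 2 = 0 ↔ u 0 ≠ u 1 := by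
  rw [psum_succ, psum_succ]
  cases u 0 <;> cases u 1 <;> simp [psum]

lemma reach_root : ∀ m : ℕ, ∀ u : SPStream, 2 ≤ m → psum u m = 0 →
    ∃ u'' u''', Relation.ReflTransGen stepSP u u'' ∧ stepAt 0 u'' u''' := by
  intro m
  induction m using Nat.strong_induction_on with
  | _ m ih =>
    intro u hm h0
    obtain ⟨i, hi, hne⟩ := exists_flip hm h0
    by_cases hm2 : m = 2
    · subst hm2
      have hroot : u 0 ≠ u 1 := (psum_two_iff u).mp h0
      exact ⟨u, fun n => u (n + 2), Relation.ReflTransGen.refl,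
        hroot, fun n => by simp⟩
    · set u' : SPStream := fun n => if n < i then u n else u (n + 2) with hu'
      have hstep : stepAt i u u' := ⟨hne, fun n => rfl⟩
      have hz : psum u' (m - 2) = 0 := by
        rw [psum_step_ge hstep (m - 2) (by omega), show m - 2 + 2 = m by omega]
        exact h0
      have h2' : 2 ≤ m - 2 := by
        rcases Nat.lt_or_ge (m - 2) 2 with hlt | hge
        · interval_cases h : (m - 2)
          · omega
          · exact absurd hz (psum_one_ne u')
        · exact hge
      obtain ⟨u'', u''', hred, hrs⟩ := ih (m - 2) (by omega) u' h2' hz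
      exact ⟨u'', u''', Relation.ReflTransGen.head ⟨i, hstep⟩ hred, hrs⟩

lemma reach_shift : ∀ m : ℕ, ∀ u : SPStream, psum u m = 0 →
    Relation.ReflTransGen stepSP u (fun n => u (n + m)) := by
  intro m
  induction m using Nat.strong_induction_on with
  | _ m ih =>
    intro u h0
    match m, h0 with
    | 0, _ => exact Relation.ReflTransGen.refl
    | 1, h0 => exact absurd h0 (psum_one_ne u)
    | (m+2), h0 =>
      obtain ⟨i, hi, hne⟩ := exists_flip (by omega) h0
      set u' : SPStream := fun n => if n < i then u n else u (n + 2) with hu'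
      have hstep : stepAt i u u' := ⟨hne, fun n => rfl⟩
      have hz : psum u' m = 0 := by
        rw [psum_step_ge hstep m (by omega)]; exact h0
      have htail := ih m (by omega) u' hz
      have heq : (fun n => u' (n + m)) = (fun n => u (n + (m + 2))) := by
        funext n
        show (if n + m < i then u (n + m) else u (n + m + 2)) = u (n + (m + 2))
        rw [if_neg (by omega)]
        congr 1
      rw [heq] at htail
      exact Relation.ReflTransGen.head ⟨i, hstep⟩ htail

lemma psum_shift (u : SPStream) (m : ℕ) :
    ∀ n, psum (fun k => u (k + m)) n = psum u (n + m) - psum u m := by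
  intro n
  induction n with
  | zero => simp [psum]
  | succ n ih =>
    rw [show psum (fun k => u (k + m)) (n + 1) = psum (fun k => u (k + m)) n + (if u (n + m) then 1 else -1) from rfl, ih, show n + 1 + m = (n + m) + 1 by ring, psum_succ]
    ring

lemma zeros_infinite_step {t t' : SPStream} (h : stepSP t t')
    (hinf : {n | psum t n = 0}.Infinite) : {n | psum t' n = 0}.Infinite := by
  obtain ⟨i, hi⟩ := h
  apply Set.infinite_of_not_bddAbove
  rintro ⟨B, hB⟩
  obtain ⟨n, hn, hgt⟩ := hinf.exists_gt (B + i + 2)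
  have hz : psum t' (n - 2) = 0 := by
    rw [psum_step_ge hi (n - 2) (by omega), show n - 2 + 2 = n by omega]
    exact hn
  have := hB hz
  omega

lemma inv_step {s : ℤ} {u u' : SPStream} (h : stepSP u u')
    (hu : ∀ n, 1 ≤ n → 1 ≤ s * psum u n) : ∀ n, 1 ≤ n → 1 ≤ s * psum u' n := by
  obtain ⟨i, hi⟩ := h
  intro n hn
  rcases le_or_gt n i with hni | hni
  · rw [psum_step_le hi n hni]; exact hu n hn
  · rw [psum_step_ge hi n (by omega)]; exact hu (n + 2) (by omega)

lemma inv_rtg {s : ℤ} {u v : SPStream} (h : Relation.ReflTransGen stepSP u v)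
    (hu : ∀ n, 1 ≤ n → 1 ≤ s * psum u n) : ∀ n, 1 ≤ n → 1 ≤ s * psum v n := by
  induction h with
  | refl => exact hu
  | tail _ hstep ihv => exact inv_step hstep ihv

end SP4

/-- a stream is root-active iff `sum(t,n) = 0` for
infinitely many `n`. -/
theorem statement4 (t : SPStream) :
    rootActive t ↔ {n : ℕ | psum t n = 0}.Infinite := by
  constructor
  · intro hra
    by_contra hfin
    rw [Set.not_infinite] at hfin
    obtain ⟨B, hB⟩ := hfin.bddAbove
    classical
    set Z := Nat.findGreatest (fun n => psum t n = 0) B with hZdef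
    have hZ0 : psum t Z = 0 :=
      Nat.findGreatest_spec (P := fun n => psum t n = 0) (m := 0) (Nat.zero_le B) rfl
    have hnz : ∀ n, Z < n → psum t n ≠ 0 := by
      intro n hn hzero
      rcases le_or_gt n B with hnB | hnB
      · exact Nat.findGreatest_is_greatest hn hnB hzero
      · exact absurd (hB hzero) (by omega)
    set s : ℤ := psum t (Z + 1) with hsdef
    have hs : s = 1 ∨ s = -1 := by
      have : psum t (Z + 1) = psum t Z + (if t Z then 1 else -1) := rfl
      rw [hsdef, this, hZ0]
      cases t Z <;> simp
    have key : ∀ k, 1 ≤ s * psum t (Z + 1 + k) := by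
      intro k
      induction k with
      | zero =>
        rcases hs with h | h <;> rw [show Z + 1 + 0 = Z + 1 from rfl, ← hsdef, h] <;> norm_num
      | succ k ih =>
        have hne : psum t (Z + 1 + (k + 1)) ≠ 0 := hnz _ (by omega)
        have hb : psum t (Z + 1 + (k + 1)) = psum t (Z + 1 + k) + 1 ∨
            psum t (Z + 1 + (k + 1)) = psum t (Z + 1 + k) + -1 := by
          have : psum t (Z + 1 + k + 1) =
              psum t (Z + 1 + k) + (if t (Z + 1 + k) then 1 else -1) := rfl
          rw [show Z + 1 + (k + 1) = Z + 1 + k + 1 by ring, this]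
          cases t (Z + 1 + k) <;> simp
        rcases hs with h | h <;> rw [h] at ih ⊢ <;>
          [skip; skip] <;> omega
    set t' : SPStream := fun n => t (n + Z) with ht'
    have hreach : Relation.ReflTransGen stepSP t t' := SP4.reach_shift Z t hZ0
    have hinv : ∀ n, 1 ≤ n → 1 ≤ s * psum t' n := by
      intro n hn
      have := SP4.psum_shift t Z n
      rw [ht', this, hZ0, sub_zero, show n + Z = Z + 1 + (n - 1) by omega]
      exact key (n - 1)
    obtain ⟨u'', u''', hred, hroot⟩ := hra t' hreach
    have hinv'' := SP4.inv_rtg hred hinv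
    have hz2 : psum u'' 2 = 0 := (SP4.psum_two_iff u'').mpr hroot.1
    have := hinv'' 2 (by omega)
    rw [hz2] at this
    omega
  · intro hinf t' hred
    have hinf' : {n | psum t' n = 0}.Infinite := by
      induction hred with
      | refl => exact hinf
      | tail _ hstep ih => exact SP4.zeros_infinite_step hstep ih
    obtain ⟨n, hn, hgt⟩ := hinf'.exists_gt 1
    exact SP4.reach_root n t' (by omega) hn
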